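/- Let a_i ∈ Act for each i < n and let all t_i, s_i be CLL process terms. If □_{i<n}a_i.t_i is injective in prefixes, then □_{i<n}a_i.t_i ∧ □_{i<n}a_i.s_i ⊑_RS □_{i<n}a_i.(t_i∧s_i). -/

import Mathlib

namespace CLL

attribute [local instance] Classical.propDecidable

/-- CLL process terms over a set `Act` of visible actions.  The action `τ` is
represented by `none : Option Act`, a visible action `a` by `some a`. -/
inductive Tm (Act : Type) : Type where
  | nil  : Tm Act                            -- 0
  | bot  : Tm Act                            -- ⊥
  | pre  : Option Act → Tm Act → Tm Act      -- α.t
  | ec   : Tm Act → Tm Act → Tm Act          -- t □ t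
  | conj : Tm Act → Tm Act → Tm Act          -- t ∧ t
  | disj : Tm Act → Tm Act → Tm Act          -- t ∨ t
  | par  : Set Act → Tm Act → Tm Act → Tm Act -- t ∥_A t

/-- A transition model: a set of transitions `t →α t'`, of instances `t F` of the
inconsistency predicate, and of instances `t F̄_α` of the auxiliary predicates. -/
structure Model (Act : Type) where
  Tr   : Tm Act → Option Act → Tm Act → Prop
  F    : Tm Act → Prop
  Fbar : Tm Act → Option Act → Prop

variable {Act : Type}

/-- The least transition relation of the positive TSS `Strip(P_CLL, M)`:
ground instances of transition rules of `P_CLL` whose negative premises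
(checked against `M`) hold, with those negative premises removed. -/
inductive STr (M : Model Act) : Tm Act → Option Act → Tm Act → Prop where
  | pre (α : Option Act) (t : Tm Act) : STr M (Tm.pre α t) α t
  | ecL {t1 t2 y1 : Tm Act} {a : Act} :
      STr M t1 (some a) y1 → (∀ y, ¬ M.Tr t2 none y) →
      STr M (Tm.ec t1 t2) (some a) y1
  | ecR {t1 t2 y2 : Tm Act} {a : Act} :
      (∀ y, ¬ M.Tr t1 none y) → STr M t2 (some a) y2 →
      STr M (Tm.ec t1 t2) (some a) y2
  | ecTauL {t1 t2 y1 : Tm Act} :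
      STr M t1 none y1 → STr M (Tm.ec t1 t2) none (Tm.ec y1 t2)
  | ecTauR {t1 t2 y2 : Tm Act} :
      STr M t2 none y2 → STr M (Tm.ec t1 t2) none (Tm.ec t1 y2)
  | conjAct {t1 t2 y1 y2 : Tm Act} {a : Act} :
      STr M t1 (some a) y1 → STr M t2 (some a) y2 →
      STr M (Tm.conj t1 t2) (some a) (Tm.conj y1 y2)
  | conjTauL {t1 t2 y1 : Tm Act} :
      STr M t1 none y1 → STr M (Tm.conj t1 t2) none (Tm.conj y1 t2)
  | conjTauR {t1 t2 y2 : Tm Act} :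
      STr M t2 none y2 → STr M (Tm.conj t1 t2) none (Tm.conj t1 y2)
  | disjL (t1 t2 : Tm Act) : STr M (Tm.disj t1 t2) none t1
  | disjR (t1 t2 : Tm Act) : STr M (Tm.disj t1 t2) none t2
  | parTauL {A : Set Act} {t1 t2 y1 : Tm Act} :
      STr M t1 none y1 → STr M (Tm.par A t1 t2) none (Tm.par A y1 t2)
  | parTauR {A : Set Act} {t1 t2 y2 : Tm Act} :
      STr M t2 none y2 → STr M (Tm.par A t1 t2) none (Tm.par A t1 y2)
  | parL {A : Set Act} {t1 t2 y1 : Tm Act} {a : Act} :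
      STr M t1 (some a) y1 → (∀ y, ¬ M.Tr t2 none y) → a ∉ A →
      STr M (Tm.par A t1 t2) (some a) (Tm.par A y1 t2)
  | parR {A : Set Act} {t1 t2 y2 : Tm Act} {a : Act} :
      (∀ y, ¬ M.Tr t1 none y) → STr M t2 (some a) y2 → a ∉ A →
      STr M (Tm.par A t1 t2) (some a) (Tm.par A t1 y2)
  | parSync {A : Set Act} {t1 t2 y1 y2 : Tm Act} {a : Act} :
      STr M t1 (some a) y1 → STr M t2 (some a) y2 → a ∈ A →
      STr M (Tm.par A t1 t2) (some a) (Tm.par A y1 y2)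

/-- Least model of the `F̄_α` rules of `Strip(P_CLL, M)`. -/
inductive SFbar (M : Model Act) : Tm Act → Option Act → Prop where
  | intro {t1 t2 y : Tm Act} {α : Option Act} :
      STr M (Tm.conj t1 t2) α y → ¬ M.F y → SFbar M (Tm.conj t1 t2) α

/-- Least model of the `F` rules of `Strip(P_CLL, M)`. -/
inductive SF (M : Model Act) : Tm Act → Prop where
  | bot : SF M Tm.bot
  | pre {t : Tm Act} (α : Option Act) : SF M t → SF M (Tm.pre α t)
  | disj {t1 t2 : Tm Act} : SF M t1 → SF M t2 → SF M (Tm.disj t1 t2)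
  | ecL {t1 t2 : Tm Act} : SF M t1 → SF M (Tm.ec t1 t2)
  | ecR {t1 t2 : Tm Act} : SF M t2 → SF M (Tm.ec t1 t2)
  | conjL {t1 t2 : Tm Act} : SF M t1 → SF M (Tm.conj t1 t2)
  | conjR {t1 t2 : Tm Act} : SF M t2 → SF M (Tm.conj t1 t2)
  | parL {A : Set Act} {t1 t2 : Tm Act} : SF M t1 → SF M (Tm.par A t1 t2)
  | parR {A : Set Act} {t1 t2 : Tm Act} : SF M t2 → SF M (Tm.par A t1 t2)
  | conjMisL {t1 t2 y1 : Tm Act} {a : Act} :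
      STr M t1 (some a) y1 → (∀ y, ¬ M.Tr t2 (some a) y) →
      (∀ y, ¬ M.Tr (Tm.conj t1 t2) none y) → SF M (Tm.conj t1 t2)
  | conjMisR {t1 t2 y2 : Tm Act} {a : Act} :
      (∀ y, ¬ M.Tr t1 (some a) y) → STr M t2 (some a) y2 →
      (∀ y, ¬ M.Tr (Tm.conj t1 t2) none y) → SF M (Tm.conj t1 t2)
  | conjDead {t1 t2 z : Tm Act} {α : Option Act} :
      STr M (Tm.conj t1 t2) α z → ¬ M.Fbar (Tm.conj t1 t2) α →
      SF M (Tm.conj t1 t2)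

/-- `M` is a stable transition model of `P_CLL`:  `M` coincides with the least
model of the positive TSS `Strip(P_CLL, M)`. -/
def IsStable (M : Model Act) : Prop :=
  (∀ t α t', M.Tr t α t' ↔ STr M t α t') ∧
  (∀ t, M.F t ↔ SF M t) ∧
  (∀ t α, M.Fbar t α ↔ SFbar M t α)

/-- `t` is stable: it has no τ-transition. -/
def Stable (M : Model Act) (t : Tm Act) : Prop := ∀ t', ¬ M.Tr t none t'

/-- The ready set `I(t)`. -/
def Ready (M : Model Act) (t : Tm Act) : Set (Option Act) :=
  {α | ∃ u, M.Tr t α u}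

/-- One τ-step between consistent terms: `t →τ_F s`. -/
def TauF (M : Model Act) (t s : Tm Act) : Prop :=
  M.Tr t none s ∧ ¬ M.F t ∧ ¬ M.F s

/-- `t ⇒ε_F s`: a sequence of τ-transitions all whose terms (endpoints included)
are consistent. -/
def EpsF (M : Model Act) (t s : Tm Act) : Prop :=
  ¬ M.F t ∧ Relation.ReflTransGen (TauF M) t s

/-- `t ⇒ε_F| s`:  `t ⇒ε_F s` with `s` stable. -/
def EpsFS (M : Model Act) (t s : Tm Act) : Prop :=
  EpsF M t s ∧ Stable M s

/-- `t ⇒α_F s`. -/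
def WeakF (M : Model Act) (α : Option Act) (t s : Tm Act) : Prop :=
  ∃ r p, EpsF M t r ∧ M.Tr r α p ∧ EpsF M p s

/-- `t ⇒α_F| s`. -/
def WeakFS (M : Model Act) (α : Option Act) (t s : Tm Act) : Prop :=
  WeakF M α t s ∧ Stable M s

/-- `R` is a stable ready simulation relation. -/
def IsRS (M : Model Act) (R : Tm Act → Tm Act → Prop) : Prop :=
  ∀ t s, R t s →
    (Stable M t ∧ Stable M s) ∧
    (¬ M.F t → ¬ M.F s) ∧
    (∀ (a : Act) t', WeakFS M (some a) t t' →
      ∃ s', WeakFS M (some a) s s' ∧ R t' s') ∧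
    (¬ M.F t → Ready M t = Ready M s)

/-- `t ⊏̃_RS s`. -/
def RSs (M : Model Act) (t s : Tm Act) : Prop :=
  ∃ R, IsRS M R ∧ R t s

/-- `t ⊑_RS s`. -/
def RSle (M : Model Act) (t s : Tm Act) : Prop :=
  ∀ t', EpsFS M t t' → ∃ s', EpsFS M s s' ∧ RSs M t' s'

/-- `t =_RS s`. -/
def RSeq (M : Model Act) (t s : Tm Act) : Prop :=
  RSle M t s ∧ RSle M s t

/-- The binary operators `□`, `∧` and `∥_A`. -/
def IsStaticOp (Act : Type) (op : Tm Act → Tm Act → Tm Act) : Prop :=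
  op = Tm.ec ∨ op = Tm.conj ∨ ∃ A : Set Act, op = Tm.par A

/-- General external choice `□_{i<n} t_i` over a finite sequence of terms. -/
def bigEC : List (Tm Act) → Tm Act
  | [] => Tm.nil
  | t :: ts => ts.foldl Tm.ec t

/-- General disjunction `⋁_{i<n} t_i` over a finite (nonempty) sequence. -/
def bigDisj : List (Tm Act) → Tm Act
  | [] => Tm.nil
  | t :: ts => ts.foldl Tm.disj t

/-- `□_{i<n} a_i.t_i` for a sequence of prefixed terms given by pairs. -/
def ecPre (l : List (Act × Tm Act)) : Tm Act :=
  bigEC (l.map fun p => Tm.pre (some p.1) p.2)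

/-- The sequence of all `a_i.(t_i ∧ s_j)` with `a_i = b_j`. -/
noncomputable def matched (l1 l2 : List (Act × Tm Act)) : List (Act × Tm Act) :=
  ((l1.product l2).filter fun q => decide (q.1.1 = q.2.1)).map
    fun q => (q.1.1, Tm.conj q.1.2 q.2.2)

/-- The right-hand side `((□Ω1)□(□Ω2))□(□Ω3)` of the expansion law. -/
noncomputable def expRHS (A : Set Act) (l1 l2 : List (Act × Tm Act)) : Tm Act :=
  Tm.ec
    (Tm.ec
      (bigEC ((l1.filter fun p => decide (p.1 ∉ A)).map
        fun p => Tm.pre (some p.1) (Tm.par A p.2 (ecPre l2))))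
      (bigEC ((l2.filter fun q => decide (q.1 ∉ A)).map
        fun q => Tm.pre (some q.1) (Tm.par A (ecPre l1) q.2))))
    (bigEC (((l1.product l2).filter fun q => decide (q.1.1 = q.2.1 ∧ q.1.1 ∈ A)).map
      fun q => Tm.pre (some q.1.1) (Tm.par A q.1.2 q.2.2)))

/-- Basic process terms: built from `0` by prefixing, `∨`, `□` and `∥_A`. -/
inductive Basic : Tm Act → Prop where
  | nil : Basic Tm.nil
  | pre (α : Option Act) {t : Tm Act} : Basic t → Basic (Tm.pre α t)
  | disj {t1 t2 : Tm Act} : Basic t1 → Basic t2 → Basic (Tm.disj t1 t2)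
  | ec {t1 t2 : Tm Act} : Basic t1 → Basic t2 → Basic (Tm.ec t1 t2)
  | par (A : Set Act) {t1 t2 : Tm Act} :
      Basic t1 → Basic t2 → Basic (Tm.par A t1 t2)

/-- Derivability `⊢ t ≤ s` in the axiomatic system `AX_CLL`. -/
inductive Deriv : Tm Act → Tm Act → Prop where
  -- inference rules
  | refl (t : Tm Act) : Deriv t t
  | trans {t u s : Tm Act} : Deriv t u → Deriv u s → Deriv t s
  | pre_mono (α : Option Act) {t s : Tm Act} :
      Deriv t s → Deriv (Tm.pre α t) (Tm.pre α s)
  | ec_mono {t1 s1 t2 s2 : Tm Act} :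
      Deriv t1 s1 → Deriv t2 s2 → Deriv (Tm.ec t1 t2) (Tm.ec s1 s2)
  | conj_mono {t1 s1 t2 s2 : Tm Act} :
      Deriv t1 s1 → Deriv t2 s2 → Deriv (Tm.conj t1 t2) (Tm.conj s1 s2)
  | disj_mono {t1 s1 t2 s2 : Tm Act} :
      Deriv t1 s1 → Deriv t2 s2 → Deriv (Tm.disj t1 t2) (Tm.disj s1 s2)
  | par_mono (A : Set Act) {t1 s1 t2 s2 : Tm Act} :
      Deriv t1 s1 → Deriv t2 s2 → Deriv (Tm.par A t1 t2) (Tm.par A s1 s2)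
  -- EC1–EC5
  | ec_comm (x y : Tm Act) : Deriv (Tm.ec x y) (Tm.ec y x)
  | ec_assoc1 (x y z : Tm Act) : Deriv (Tm.ec (Tm.ec x y) z) (Tm.ec x (Tm.ec y z))
  | ec_assoc2 (x y z : Tm Act) : Deriv (Tm.ec x (Tm.ec y z)) (Tm.ec (Tm.ec x y) z)
  | ec_idem1 (x : Tm Act) : Deriv (Tm.ec x x) x
  | ec_idem2 (x : Tm Act) : Deriv x (Tm.ec x x)
  | ec_nil1 (x : Tm Act) : Deriv (Tm.ec x Tm.nil) x
  | ec_nil2 (x : Tm Act) : Deriv x (Tm.ec x Tm.nil)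
  | ec_bot1 (x : Tm Act) : Deriv (Tm.ec x Tm.bot) Tm.bot
  | ec_bot2 (x : Tm Act) : Deriv Tm.bot (Tm.ec x Tm.bot)
  -- DI1–DI5
  | di_comm (x y : Tm Act) : Deriv (Tm.disj x y) (Tm.disj y x)
  | di_assoc1 (x y z : Tm Act) :
      Deriv (Tm.disj x (Tm.disj y z)) (Tm.disj (Tm.disj x y) z)
  | di_assoc2 (x y z : Tm Act) :
      Deriv (Tm.disj (Tm.disj x y) z) (Tm.disj x (Tm.disj y z))
  | di_idem1 (x : Tm Act) : Deriv (Tm.disj x x) x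
  | di_idem2 (x : Tm Act) : Deriv x (Tm.disj x x)
  | di_bot1 (x : Tm Act) : Deriv (Tm.disj x Tm.bot) x
  | di_bot2 (x : Tm Act) : Deriv x (Tm.disj x Tm.bot)
  | di_le (x y : Tm Act) : Deriv x (Tm.disj x y)
  -- CO1–CO4
  | co_comm (x y : Tm Act) : Deriv (Tm.conj x y) (Tm.conj y x)
  | co_assoc1 (x y z : Tm Act) :
      Deriv (Tm.conj (Tm.conj x y) z) (Tm.conj x (Tm.conj y z))
  | co_assoc2 (x y z : Tm Act) :
      Deriv (Tm.conj x (Tm.conj y z)) (Tm.conj (Tm.conj x y) z)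
  | co_idem1 (x : Tm Act) : Deriv (Tm.conj x x) x
  | co_idem2 (x : Tm Act) : Deriv x (Tm.conj x x)
  | co_bot1 (x : Tm Act) : Deriv (Tm.conj x Tm.bot) Tm.bot
  | co_bot2 (x : Tm Act) : Deriv Tm.bot (Tm.conj x Tm.bot)
  -- DS1–DS4
  | ds1 (x y z : Tm Act) :
      Deriv (Tm.ec x (Tm.disj y z)) (Tm.disj (Tm.ec x y) (Tm.ec x z))
  | ds2 (x y z : Tm Act) :
      Deriv (Tm.conj x (Tm.disj y z)) (Tm.disj (Tm.conj x y) (Tm.conj x z))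
  | ds3 (A : Set Act) (x y z : Tm Act) :
      Deriv (Tm.par A x (Tm.disj y z)) (Tm.disj (Tm.par A x y) (Tm.par A x z))
  | ds4 (a : Act) {x y : Tm Act} : Basic x → Basic y →
      Deriv (Tm.pre (some a) (Tm.disj x y))
            (Tm.ec (Tm.pre (some a) x) (Tm.pre (some a) y))
  -- PR1, PR2
  | pr1a (a : Act) : Deriv (Tm.pre (some a) Tm.bot) Tm.bot
  | pr1b (a : Act) : Deriv Tm.bot (Tm.pre (some a) Tm.bot)
  | pr2a (x : Tm Act) : Deriv (Tm.pre none x) x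
  | pr2b (x : Tm Act) : Deriv x (Tm.pre none x)
  -- PA1, PA2
  | pa_comm (A : Set Act) (x y : Tm Act) : Deriv (Tm.par A x y) (Tm.par A y x)
  | pa_bot1 (A : Set Act) (x : Tm Act) : Deriv (Tm.par A x Tm.bot) Tm.bot
  | pa_bot2 (A : Set Act) (x : Tm Act) : Deriv Tm.bot (Tm.par A x Tm.bot)
  -- ECC1–ECC3
  | ecc1a (l1 l2 : List (Act × Tm Act)) :
      ({a | a ∈ l1.map Prod.fst} : Set Act) ≠ {a | a ∈ l2.map Prod.fst} →
      Deriv (Tm.conj (ecPre l1) (ecPre l2)) Tm.bot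
  | ecc1b (l1 l2 : List (Act × Tm Act)) :
      ({a | a ∈ l1.map Prod.fst} : Set Act) ≠ {a | a ∈ l2.map Prod.fst} →
      Deriv Tm.bot (Tm.conj (ecPre l1) (ecPre l2))
  | ecc2 (l : List (Act × Tm Act × Tm Act)) :
      Deriv (ecPre (l.map fun p => (p.1, Tm.conj p.2.1 p.2.2)))
            (Tm.conj (ecPre (l.map fun p => (p.1, p.2.1)))
                     (ecPre (l.map fun p => (p.1, p.2.2))))
  | ecc3 (l : List (Act × Tm Act × Tm Act)) :
      (l.map Prod.fst).Nodup →
      Deriv (Tm.conj (ecPre (l.map fun p => (p.1, p.2.1)))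
                     (ecPre (l.map fun p => (p.1, p.2.2))))
            (ecPre (l.map fun p => (p.1, Tm.conj p.2.1 p.2.2)))
  -- EXP1, EXP2
  | exp1 (A : Set Act) (l1 l2 : List (Act × Tm Act)) :
      (∀ p ∈ l1, Basic p.2) → (∀ q ∈ l2, Basic q.2) →
      Deriv (Tm.par A (ecPre l1) (ecPre l2)) (expRHS A l1 l2)
  | exp2 (A : Set Act) (l1 l2 : List (Act × Tm Act)) :
      (∀ p ∈ l1, Basic p.2) → (∀ q ∈ l2, Basic q.2) →
      Deriv (expRHS A l1 l2) (Tm.par A (ecPre l1) (ecPre l2))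

/-- The set `NF_B` of normal forms different from `⊥`. -/
inductive NFB : Tm Act → Prop where
  | mk (ls : List (List (Act × Tm Act))) :
      ls ≠ [] →
      (∀ l ∈ ls, (l.map Prod.fst).Nodup) →
      (∀ l ∈ ls, ∀ p ∈ l, NFB p.2) →
      NFB (bigDisj (ls.map ecPre))

/-- Normal forms. -/
def NF (t : Tm Act) : Prop := t = Tm.bot ∨ NFB t

section Aux

variable {Act : Type} {M : Model Act}

theorem nodup_key_inj {β : Type _} {f : β → Act} :
    ∀ {l : List β}, (l.map f).Nodup → ∀ p ∈ l, ∀ q ∈ l, f p = f q → p = q := by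
  intro l
  induction l with
  | nil => simp
  | cons a l ih =>
    intro h p hp q hq hfe
    simp only [List.map_cons, List.nodup_cons] at h
    simp only [List.mem_cons] at hp hq
    rcases hp with rfl | hp <;> rcases hq with rfl | hq
    · rfl
    · exact absurd (hfe ▸ List.mem_map_of_mem (f := f) hq) h.1
    · exact absurd (hfe ▸ List.mem_map_of_mem (f := f) hp) h.1
    · exact ih h.2 p hp q hq hfe

variable (hM : IsStable M)
include hM

theorem stable_pre' (a : Act) (u : Tm Act) : Stable M (Tm.pre (some a) u) := by
  intro y hy; rw [hM.1] at hy; cases hy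

theorem stable_ec {t1 t2 : Tm Act} (h1 : Stable M t1) (h2 : Stable M t2) :
    Stable M (Tm.ec t1 t2) := by
  intro y hy; rw [hM.1] at hy
  cases hy with
  | ecTauL h => exact h1 _ ((hM.1 _ _ _).mpr h)
  | ecTauR h => exact h2 _ ((hM.1 _ _ _).mpr h)

theorem stable_foldl :
    ∀ (ts : List (Tm Act)) (acc : Tm Act), (∀ t ∈ ts, Stable M t) → Stable M acc →
      Stable M (ts.foldl Tm.ec acc)
  | [], _, _, h => h
  | t :: ts, acc, hts, hacc =>
      stable_foldl ts _ (fun u hu => hts u (List.mem_cons_of_mem _ hu))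
        (stable_ec hM hacc (hts t (List.mem_cons_self)))

theorem tr_pre {b : Act} {u : Tm Act} {a : Act} {y : Tm Act} :
    M.Tr (Tm.pre (some b) u) (some a) y ↔ b = a ∧ y = u := by
  rw [hM.1]
  constructor
  · intro h; cases h; exact ⟨rfl, rfl⟩
  · rintro ⟨rfl, rfl⟩; exact STr.pre _ _

theorem tr_ec {t1 t2 : Tm Act} (h1 : Stable M t1) (h2 : Stable M t2) {a : Act} {y : Tm Act} :
    M.Tr (Tm.ec t1 t2) (some a) y ↔ M.Tr t1 (some a) y ∨ M.Tr t2 (some a) y := by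
  rw [hM.1]
  constructor
  · intro h
    cases h with
    | ecL h _ => exact Or.inl ((hM.1 _ _ _).mpr h)
    | ecR _ h => exact Or.inr ((hM.1 _ _ _).mpr h)
  · rintro (h | h)
    · exact STr.ecL ((hM.1 _ _ _).mp h) h2
    · exact STr.ecR h1 ((hM.1 _ _ _).mp h)

theorem tr_foldl :
    ∀ (ts : List (Tm Act)) (acc : Tm Act), (∀ t ∈ ts, Stable M t) → Stable M acc →
      ∀ (a : Act) (y : Tm Act),
      (M.Tr (ts.foldl Tm.ec acc) (some a) y ↔
        M.Tr acc (some a) y ∨ ∃ t ∈ ts, M.Tr t (some a) y) := by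
  intro ts
  induction ts with
  | nil => intro acc _ _ a y; simp
  | cons t ts ih =>
    intro acc hts hacc a y
    have ht : Stable M t := hts t (List.mem_cons_self)
    rw [List.foldl_cons,
      ih _ (fun u hu => hts u (List.mem_cons_of_mem _ hu)) (stable_ec hM hacc ht),
      tr_ec hM hacc ht]
    simp only [List.mem_cons]
    constructor
    · rintro ((h | h) | ⟨u, hu, h⟩)
      · exact Or.inl h
      · exact Or.inr ⟨t, Or.inl rfl, h⟩
      · exact Or.inr ⟨u, Or.inr hu, h⟩
    · rintro (h | ⟨u, rfl | hu, h⟩)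
      · exact Or.inl (Or.inl h)
      · exact Or.inl (Or.inr h)
      · exact Or.inr ⟨u, hu, h⟩

theorem F_nil : ¬ M.F (Tm.nil : Tm Act) := by
  rw [hM.2.1]; intro h; cases h

theorem F_pre {α : Option Act} {u : Tm Act} (h : M.F (Tm.pre α u)) : M.F u := by
  rw [hM.2.1] at h ⊢
  cases h with
  | pre _ h => exact h

theorem F_ec {t1 t2 : Tm Act} (h : M.F (Tm.ec t1 t2)) : M.F t1 ∨ M.F t2 := by
  rw [hM.2.1] at h
  cases h with
  | ecL h => exact Or.inl ((hM.2.1 _).mpr h)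
  | ecR h => exact Or.inr ((hM.2.1 _).mpr h)

theorem F_foldl :
    ∀ (ts : List (Tm Act)) (acc : Tm Act), M.F (ts.foldl Tm.ec acc) →
      M.F acc ∨ ∃ t ∈ ts, M.F t := by
  intro ts
  induction ts with
  | nil => intro acc h; exact Or.inl h
  | cons t ts ih =>
    intro acc h
    rcases ih _ h with h | ⟨u, hu, h⟩
    · rcases F_ec hM h with h | h
      · exact Or.inl h
      · exact Or.inr ⟨t, List.mem_cons_self, h⟩
    · exact Or.inr ⟨u, List.mem_cons_of_mem _ hu, h⟩

theorem ecPre_stable (L : List (Act × Tm Act)) : Stable M (ecPre L) := by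
  cases L with
  | nil =>
    intro y hy; rw [hM.1] at hy; cases hy
  | cons q L =>
    refine stable_foldl hM _ _ ?_ (stable_pre' hM _ _)
    intro t ht
    obtain ⟨p, -, rfl⟩ := List.mem_map.mp ht
    exact stable_pre' hM _ _

theorem ecPre_tr (L : List (Act × Tm Act)) (a : Act) (y : Tm Act) :
    M.Tr (ecPre L) (some a) y ↔ ∃ q ∈ L, q.1 = a ∧ y = q.2 := by
  cases L with
  | nil =>
    simp only [List.not_mem_nil, false_and, exists_false, iff_false]
    intro h; rw [hM.1] at h; cases h
  | cons q L =>
    have : ∀ t ∈ L.map fun p => Tm.pre (some p.1) p.2, Stable M t := by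
      intro t ht
      obtain ⟨p, -, rfl⟩ := List.mem_map.mp ht
      exact stable_pre' hM _ _
    rw [show ecPre (q :: L) = (L.map fun p => Tm.pre (some p.1) p.2).foldl Tm.ec
        (Tm.pre (some q.1) q.2) from rfl,
      tr_foldl hM _ _ this (stable_pre' hM _ _), tr_pre hM]
    simp only [List.mem_map, List.mem_cons]
    constructor
    · rintro (⟨rfl, rfl⟩ | ⟨t, ⟨p, hp, rfl⟩, h⟩)
      · exact ⟨q, Or.inl rfl, rfl, rfl⟩
      · obtain ⟨rfl, rfl⟩ := (tr_pre hM).mp h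
        exact ⟨p, Or.inr hp, rfl, rfl⟩
    · rintro ⟨p, rfl | hp, rfl, rfl⟩
      · exact Or.inl ⟨rfl, rfl⟩
      · exact Or.inr ⟨_, ⟨p, hp, rfl⟩, (tr_pre hM).mpr ⟨rfl, rfl⟩⟩

theorem ecPre_F {L : List (Act × Tm Act)} (h : M.F (ecPre L)) :
    ∃ q ∈ L, M.F q.2 := by
  cases L with
  | nil => exact absurd h (F_nil hM)
  | cons q L =>
    rcases F_foldl hM _ _ h with h | ⟨t, ht, h⟩
    · exact ⟨q, List.mem_cons_self, F_pre hM h⟩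
    · obtain ⟨p, hp, rfl⟩ := List.mem_map.mp ht
      exact ⟨p, List.mem_cons_of_mem _ hp, F_pre hM h⟩

theorem epsF_stable_eq {t r : Tm Act} (ht : Stable M t) (h : EpsF M t r) : r = t := by
  obtain ⟨-, h⟩ := h
  rcases h.cases_head with h | ⟨c, ⟨hc, -, -⟩, -⟩
  · exact h.symm
  · exact absurd hc (ht c)

end Aux

section Main

variable {Act : Type} {M : Model Act} (hM : IsStable M)
include hM

theorem ecPre_tr_map {β : Type _} (g : β → Act) (h : β → Tm Act) (l : List β)
    (a : Act) (y : Tm Act) :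
    M.Tr (ecPre (l.map fun p => (g p, h p))) (some a) y ↔
      ∃ p ∈ l, g p = a ∧ y = h p := by
  rw [ecPre_tr hM]
  simp

theorem stmt15_aux (l : List (Act × Tm Act × Tm Act))
    (hinj : (l.map Prod.fst).Nodup) :
    RSle M
      (Tm.conj (ecPre (l.map fun p => (p.1, p.2.1)))
               (ecPre (l.map fun p => (p.1, p.2.2))))
      (ecPre (l.map fun p => (p.1, Tm.conj p.2.1 p.2.2))) := by
  set u : Tm Act := ecPre (l.map fun p => (p.1, p.2.1)) with hu_def
  set v : Tm Act := ecPre (l.map fun p => (p.1, p.2.2)) with hv_def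
  set s : Tm Act := ecPre (l.map fun p => (p.1, Tm.conj p.2.1 p.2.2)) with hs_def
  set t : Tm Act := Tm.conj u v with ht_def
  have keyinj : ∀ p ∈ l, ∀ q ∈ l, p.1 = q.1 → p = q :=
    nodup_key_inj (f := Prod.fst) hinj
  have hu : ∀ (a : Act) (y : Tm Act), M.Tr u (some a) y ↔ ∃ p ∈ l, p.1 = a ∧ y = p.2.1 :=
    fun a y => ecPre_tr_map hM (fun p => p.1) (fun p => p.2.1) l a y
  have hv : ∀ (a : Act) (y : Tm Act), M.Tr v (some a) y ↔ ∃ p ∈ l, p.1 = a ∧ y = p.2.2 :=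
    fun a y => ecPre_tr_map hM (fun p => p.1) (fun p => p.2.2) l a y
  have htr_s : ∀ (a : Act) (y : Tm Act),
      M.Tr s (some a) y ↔ ∃ p ∈ l, p.1 = a ∧ y = Tm.conj p.2.1 p.2.2 :=
    fun a y => ecPre_tr_map hM (fun p => p.1) (fun p => Tm.conj p.2.1 p.2.2) l a y
  have htr_t : ∀ (a : Act) (y : Tm Act),
      M.Tr t (some a) y ↔ ∃ p ∈ l, p.1 = a ∧ y = Tm.conj p.2.1 p.2.2 := by
    intro a y
    constructor
    · intro h
      rw [hM.1, ht_def] at h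
      cases h with
      | conjAct h1 h2 =>
        obtain ⟨p, hp, hpa, rfl⟩ := (hu _ _).mp ((hM.1 _ _ _).mpr h1)
        obtain ⟨q, hq, hqa, rfl⟩ := (hv _ _).mp ((hM.1 _ _ _).mpr h2)
        cases keyinj p hp q hq (hpa.trans hqa.symm)
        exact ⟨p, hp, hpa, rfl⟩
    · rintro ⟨p, hp, rfl, rfl⟩
      rw [hM.1]
      exact STr.conjAct ((hM.1 _ _ _).mp ((hu _ _).mpr ⟨p, hp, rfl, rfl⟩))
        ((hM.1 _ _ _).mp ((hv _ _).mpr ⟨p, hp, rfl, rfl⟩))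
  have hstab_u : Stable M u := ecPre_stable hM _
  have hstab_v : Stable M v := ecPre_stable hM _
  have hstab_s : Stable M s := ecPre_stable hM _
  have hstab_t : Stable M t := by
    intro y hy
    rw [hM.1, ht_def] at hy
    cases hy with
    | conjTauL h => exact hstab_u _ ((hM.1 _ _ _).mpr h)
    | conjTauR h => exact hstab_v _ ((hM.1 _ _ _).mpr h)
  have hFts : ¬ M.F t → ¬ M.F s := by
    intro hFt hFs
    obtain ⟨q, hq, hFq⟩ := ecPre_F hM hFs
    obtain ⟨p, hp, rfl⟩ := List.mem_map.mp hq
    apply hFt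
    rw [hM.2.1]
    have htrz : M.Tr t (some p.1) (Tm.conj p.2.1 p.2.2) :=
      (htr_t _ _).mpr ⟨p, hp, rfl, rfl⟩
    rw [ht_def] at htrz ⊢
    refine SF.conjDead ((hM.1 _ _ _).mp htrz) ?_
    intro hFb
    rw [hM.2.2] at hFb
    cases hFb with
    | intro h1 h2 =>
      rw [← ht_def] at h1
      obtain ⟨p', hp', hpa, rfl⟩ := (htr_t _ _).mp ((hM.1 _ _ _).mpr h1)
      cases keyinj p' hp' p hp hpa
      exact h2 hFq
  have hready : Ready M t = Ready M s := by
    ext α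
    cases α with
    | none =>
      simp only [Ready, Set.mem_setOf_eq]
      constructor
      · rintro ⟨y, hy⟩; exact absurd hy (hstab_t y)
      · rintro ⟨y, hy⟩; exact absurd hy (hstab_s y)
    | some a =>
      simp only [Ready, Set.mem_setOf_eq]
      constructor
      · rintro ⟨y, hy⟩
        obtain ⟨p, hp, hpa, rfl⟩ := (htr_t _ _).mp hy
        exact ⟨_, (htr_s _ _).mpr ⟨p, hp, hpa, rfl⟩⟩
      · rintro ⟨y, hy⟩
        obtain ⟨p, hp, hpa, rfl⟩ := (htr_s _ _).mp hy
        exact ⟨_, (htr_t _ _).mpr ⟨p, hp, hpa, rfl⟩⟩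
  intro t0 ht0
  obtain ⟨hE, hst0⟩ := ht0
  have hFt : ¬ M.F t := hE.1
  have ht0t : t0 = t := epsF_stable_eq hM hstab_t hE
  subst ht0t
  refine ⟨s, ⟨⟨hFts hFt, Relation.ReflTransGen.refl⟩, hstab_s⟩,
    fun x y => (x = t ∧ y = s) ∨ (x = y ∧ Stable M x), ?_, Or.inl ⟨rfl, rfl⟩⟩
  intro x y hxy
  rcases hxy with ⟨rfl, rfl⟩ | ⟨rfl, hx⟩
  · refine ⟨⟨hstab_t, hstab_s⟩, hFts, ?_, fun _ => hready⟩
    rintro a t' ⟨⟨r, p, hEr, hTr, hEp⟩, hst'⟩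
    have hrt : r = t := epsF_stable_eq hM hstab_t hEr
    subst hrt
    have htrs : M.Tr s (some a) p := by
      obtain ⟨q, hq, hqa, rfl⟩ := (htr_t _ _).mp hTr
      exact (htr_s _ _).mpr ⟨q, hq, hqa, rfl⟩
    exact ⟨t', ⟨⟨s, p, ⟨hFts hEr.1, Relation.ReflTransGen.refl⟩, htrs, hEp⟩, hst'⟩,
      Or.inr ⟨rfl, hst'⟩⟩
  · exact ⟨⟨hx, hx⟩, id, fun a t' h => ⟨t', h, Or.inr ⟨rfl, h.2⟩⟩, fun _ => rfl⟩

end Main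

end CLL

/-- for choices injective in prefixes, conjunction distributes
over the general external choice. -/
theorem stmt15 (Act : Type) (M : CLL.Model Act) (hM : CLL.IsStable M)
    (l : List (Act × CLL.Tm Act × CLL.Tm Act))
    (hinj : (l.map Prod.fst).Nodup) :
    CLL.RSle M
      (CLL.Tm.conj (CLL.ecPre (l.map fun p => (p.1, p.2.1)))
                   (CLL.ecPre (l.map fun p => (p.1, p.2.2))))
      (CLL.ecPre (l.map fun p => (p.1, CLL.Tm.conj p.2.1 p.2.2))) :=
  CLL.stmt15_aux hM l hinj
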